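/- Assume n ≠ 2p. If F₁ is a 2×2 complex matrix valued polynomial with deg F₁ ≤ 1 and F₀ is a constant 2×2 complex matrix such that for every integer w ≥ 0 there exists a 2×2 complex matrix Λ_w with P_w'(x)·F₁(x) + P_w(x)·F₀ = Λ_w·P_w(x) for all real x, then F₁ = 0 and F₀ is a scalar multiple of the identity; that is, there are no operators of order one having the polynomials P_w as eigenfunctions. -/

import Mathlib

open scoped BigOperators Matrix

noncomputable section

/-- Gegenbauer polynomials `C_k^lam` with natural number index, defined by the
three-term recurrence. -/
def Geg (lam : ℝ) : ℕ → ℝ → ℝ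
  | 0 => fun _ => 1
  | 1 => fun x => 2 * lam * x
  | (k + 2) => fun x =>
      (2 * ((k : ℝ) + 2 + lam - 1) * x * Geg lam (k + 1) x
        - ((k : ℝ) + 2 + 2 * lam - 2) * Geg lam k x) / ((k : ℝ) + 2)

/-- Gegenbauer polynomials with integer index, equal to `0` for negative index. -/
def GegZ (lam : ℝ) (k : ℤ) (x : ℝ) : ℝ :=
  if k < 0 then 0 else Geg lam k.toNat x

/-- The 2×2 matrix valued polynomials `P_w`. -/
def Pw (p n : ℝ) (w : ℕ) (x : ℝ) : Matrix (Fin 2) (Fin 2) ℂ :=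
  !![(((1 / (n + 1)) * GegZ ((n + 1) / 2) (w : ℤ) x
        + (1 / (p + w)) * GegZ ((n + 3) / 2) ((w : ℤ) - 2) x : ℝ) : ℂ),
     (((1 / (p + w)) * GegZ ((n + 3) / 2) ((w : ℤ) - 1) x : ℝ) : ℂ);
     (((1 / (n - p + w)) * GegZ ((n + 3) / 2) ((w : ℤ) - 1) x : ℝ) : ℂ),
     (((1 / (n + 1)) * GegZ ((n + 1) / 2) (w : ℤ) x
        + (1 / (n - p + w)) * GegZ ((n + 3) / 2) ((w : ℤ) - 2) x : ℝ) : ℂ)]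

/-- The weight matrix `W_{p,n}` on `(-1,1)`. -/
def Wmat (p n : ℝ) (x : ℝ) : Matrix (Fin 2) (Fin 2) ℂ :=
  (((1 - x ^ 2) ^ (n / 2 - 1) : ℝ) : ℂ) •
    !![((p * x ^ 2 + n - p : ℝ) : ℂ), ((-(n * x) : ℝ) : ℂ);
       ((-(n * x) : ℝ) : ℂ), (((n - p) * x ^ 2 + p : ℝ) : ℂ)]

/-- Entrywise derivative of a matrix valued function. -/
def mderiv (P : ℝ → Matrix (Fin 2) (Fin 2) ℂ) : ℝ → Matrix (Fin 2) (Fin 2) ℂ :=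
  fun x => Matrix.of fun i j => deriv (fun t => P t i j) x

/-- The matrix valued inner product `⟨P,Q⟩ = ∫_{-1}^{1} P(x) W(x) Q(x)^* dx`. -/
def mint (p n : ℝ) (P Q : ℝ → Matrix (Fin 2) (Fin 2) ℂ) : Matrix (Fin 2) (Fin 2) ℂ :=
  Matrix.of fun i j => ∫ x in (-1 : ℝ)..1, (P x * Wmat p n x * (Q x)ᴴ) i j

/-- A matrix valued function is polynomial if each entry is given by a polynomial. -/
def IsPolyMat (P : ℝ → Matrix (Fin 2) (Fin 2) ℂ) : Prop :=
  ∀ i j, ∃ q : Polynomial ℂ, ∀ x : ℝ, P x i j = q.eval (x : ℂ)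


set_option maxHeartbeats 4000000

section closed
variable {p n : ℝ}

lemma hasDerivAt_cubic (a b c d x : ℝ) :
    HasDerivAt (fun t : ℝ => ((a*t^3 + b*t^2 + c*t + d : ℝ) : ℂ))
      ((3*a*x^2 + 2*b*x + c : ℝ) : ℂ) x := by
  apply HasDerivAt.ofReal_comp
  have h3 := (hasDerivAt_pow 3 x).const_mul a
  have h2 := (hasDerivAt_pow 2 x).const_mul b
  have h1 := (hasDerivAt_id x).const_mul c
  convert ((h3.add h2).add h1).add_const d using 1
  · rfl
  · rfl
  · rfl
  · push_cast; ring

section closed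
variable {p n : ℝ}

lemma Pw1 (hn1 : (n:ℂ) + 1 ≠ 0) (x : ℝ) :
    Pw p n 1 x = !![((x:ℝ):ℂ), ((1/(p+1) : ℝ):ℂ); ((1/(n-p+1):ℝ):ℂ), ((x:ℝ):ℂ)] := by
  ext i j
  fin_cases i <;> fin_cases j <;>
    · show (((_ : ℝ)) : ℂ) = _
      push_cast [Pw, GegZ, Geg]
      norm_num
      try (field_simp; try ring)

lemma Pw2 (hn1 : (n:ℂ) + 1 ≠ 0) (x : ℝ) :
    Pw p n 2 x = !![(((n+3)/2*x^2 - 1/2 + 1/(p+2) : ℝ):ℂ), (((n+3)/(p+2)*x : ℝ):ℂ);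
      (((n+3)/(n-p+2)*x : ℝ):ℂ), (((n+3)/2*x^2 - 1/2 + 1/(n-p+2) : ℝ):ℂ)] := by
  ext i j
  fin_cases i <;> fin_cases j <;>
    · show (((_ : ℝ)) : ℂ) = _
      push_cast [Pw, GegZ, Geg]
      norm_num
      try (field_simp; try ring)

lemma Pw3 (hn1 : (n:ℂ) + 1 ≠ 0) (hp3 : (p:ℂ) + 3 ≠ 0) (hq3 : (n:ℂ) - p + 3 ≠ 0) (x : ℝ) :
    Pw p n 3 x = !![(((n+3)*(n+5)/6*x^3 - (n+3)/2*x + (n+3)/(p+3)*x : ℝ):ℂ),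
      (((n+3)*(n+5)/(2*(p+3))*x^2 - (n+3)/(2*(p+3)) : ℝ):ℂ);
      (((n+3)*(n+5)/(2*(n-p+3))*x^2 - (n+3)/(2*(n-p+3)) : ℝ):ℂ),
      (((n+3)*(n+5)/6*x^3 - (n+3)/2*x + (n+3)/(n-p+3)*x : ℝ):ℂ)] := by
  ext i j
  fin_cases i <;> fin_cases j <;>
    · show (((_ : ℝ)) : ℂ) = _
      push_cast [Pw, GegZ, Geg]
      norm_num
      field_simp
      ring

lemma mderiv1 (hn1 : (n:ℂ) + 1 ≠ 0) (x : ℝ) :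
    mderiv (Pw p n 1) x = !![(1:ℂ), 0; 0, 1] := by
  ext i j
  fin_cases i <;> fin_cases j
  · show deriv (fun t => Pw p n 1 t 0 0) x = 1
    rw [show (fun t => Pw p n 1 t 0 0) = (fun t:ℝ => (((0:ℝ)*t^3+0*t^2+1*t+0:ℝ):ℂ)) from
      funext fun t => by rw [Pw1 hn1]; norm_num, (hasDerivAt_cubic 0 0 1 0 x).deriv]
    norm_num
  · show deriv (fun t => Pw p n 1 t 0 1) x = 0
    rw [show (fun t => Pw p n 1 t 0 1) = (fun t:ℝ => (((0:ℝ)*t^3+0*t^2+0*t+(1/(p+1)):ℝ):ℂ)) from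
      funext fun t => by rw [Pw1 hn1]; norm_num, (hasDerivAt_cubic 0 0 0 _ x).deriv]
    norm_num
  · show deriv (fun t => Pw p n 1 t 1 0) x = 0
    rw [show (fun t => Pw p n 1 t 1 0) = (fun t:ℝ => (((0:ℝ)*t^3+0*t^2+0*t+(1/(n-p+1)):ℝ):ℂ)) from
      funext fun t => by rw [Pw1 hn1]; norm_num, (hasDerivAt_cubic 0 0 0 _ x).deriv]
    norm_num
  · show deriv (fun t => Pw p n 1 t 1 1) x = 1
    rw [show (fun t => Pw p n 1 t 1 1) = (fun t:ℝ => (((0:ℝ)*t^3+0*t^2+1*t+0:ℝ):ℂ)) from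
      funext fun t => by rw [Pw1 hn1]; norm_num, (hasDerivAt_cubic 0 0 1 0 x).deriv]
    norm_num

lemma mderiv2 {p n : ℝ} (hn1 : (n:ℂ) + 1 ≠ 0) (x : ℝ) :
    mderiv (Pw p n 2) x = !![(((n+3)*x:ℝ):ℂ), (((n+3)/(p+2):ℝ):ℂ);
      (((n+3)/(n-p+2):ℝ):ℂ), (((n+3)*x:ℝ):ℂ)] := by
  ext i j
  fin_cases i <;> fin_cases j
  · show deriv (fun t => Pw p n 2 t 0 0) x = (((n+3)*x:ℝ):ℂ)
    rw [show (fun t => Pw p n 2 t 0 0)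
        = (fun t:ℝ => (((0:ℝ)*t^3+((n+3)/2)*t^2+0*t+(1/(p+2)-1/2):ℝ):ℂ)) from
      funext fun t => by rw [Pw2 hn1]; show ((_:ℝ):ℂ) = _; push_cast; ring,
      (hasDerivAt_cubic _ _ _ _ x).deriv]
    push_cast; ring
  · show deriv (fun t => Pw p n 2 t 0 1) x = (((n+3)/(p+2):ℝ):ℂ)
    rw [show (fun t => Pw p n 2 t 0 1)
        = (fun t:ℝ => (((0:ℝ)*t^3+0*t^2+((n+3)/(p+2))*t+0:ℝ):ℂ)) from
      funext fun t => by rw [Pw2 hn1]; show ((_:ℝ):ℂ) = _; push_cast; ring,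
      (hasDerivAt_cubic _ _ _ _ x).deriv]
    push_cast; ring
  · show deriv (fun t => Pw p n 2 t 1 0) x = (((n+3)/(n-p+2):ℝ):ℂ)
    rw [show (fun t => Pw p n 2 t 1 0)
        = (fun t:ℝ => (((0:ℝ)*t^3+0*t^2+((n+3)/(n-p+2))*t+0:ℝ):ℂ)) from
      funext fun t => by rw [Pw2 hn1]; show ((_:ℝ):ℂ) = _; push_cast; ring,
      (hasDerivAt_cubic _ _ _ _ x).deriv]
    push_cast; ring
  · show deriv (fun t => Pw p n 2 t 1 1) x = (((n+3)*x:ℝ):ℂ)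
    rw [show (fun t => Pw p n 2 t 1 1)
        = (fun t:ℝ => (((0:ℝ)*t^3+((n+3)/2)*t^2+0*t+(1/(n-p+2)-1/2):ℝ):ℂ)) from
      funext fun t => by rw [Pw2 hn1]; show ((_:ℝ):ℂ) = _; push_cast; ring,
      (hasDerivAt_cubic _ _ _ _ x).deriv]
    push_cast; ring

lemma mderiv3 {p n : ℝ} (hn1 : (n:ℂ) + 1 ≠ 0) (hp3 : (p:ℂ) + 3 ≠ 0)
    (hq3 : (n:ℂ) - p + 3 ≠ 0) (x : ℝ) :
    mderiv (Pw p n 3) x = !![(((n+3)*(n+5)/2*x^2 + (n+3)/(p+3) - (n+3)/2 : ℝ):ℂ),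
      (((n+3)*(n+5)/(p+3)*x : ℝ):ℂ); (((n+3)*(n+5)/(n-p+3)*x : ℝ):ℂ),
      (((n+3)*(n+5)/2*x^2 + (n+3)/(n-p+3) - (n+3)/2 : ℝ):ℂ)] := by
  ext i j
  fin_cases i <;> fin_cases j
  · show deriv (fun t => Pw p n 3 t 0 0) x = (((n+3)*(n+5)/2*x^2 + (n+3)/(p+3) - (n+3)/2 : ℝ):ℂ)
    rw [show (fun t => Pw p n 3 t 0 0)
        = (fun t:ℝ => ((((n+3)*(n+5)/6:ℝ)*t^3+0*t^2+((n+3)/(p+3)-(n+3)/2)*t+0:ℝ):ℂ)) from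
      funext fun t => by rw [Pw3 hn1 hp3 hq3]; show ((_:ℝ):ℂ) = _; push_cast; ring,
      (hasDerivAt_cubic _ _ _ _ x).deriv]
    push_cast; ring
  · show deriv (fun t => Pw p n 3 t 0 1) x = (((n+3)*(n+5)/(p+3)*x : ℝ):ℂ)
    rw [show (fun t => Pw p n 3 t 0 1)
        = (fun t:ℝ => (((0:ℝ)*t^3+((n+3)*(n+5)/(2*(p+3)))*t^2+0*t+(-((n+3)/(2*(p+3)))):ℝ):ℂ)) from
      funext fun t => by rw [Pw3 hn1 hp3 hq3]; show ((_:ℝ):ℂ) = _; push_cast; ring,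
      (hasDerivAt_cubic _ _ _ _ x).deriv]
    push_cast; field_simp; ring
  · show deriv (fun t => Pw p n 3 t 1 0) x = (((n+3)*(n+5)/(n-p+3)*x : ℝ):ℂ)
    rw [show (fun t => Pw p n 3 t 1 0)
        = (fun t:ℝ => (((0:ℝ)*t^3+((n+3)*(n+5)/(2*(n-p+3)))*t^2+0*t+(-((n+3)/(2*(n-p+3)))):ℝ):ℂ)) from
      funext fun t => by rw [Pw3 hn1 hp3 hq3]; show ((_:ℝ):ℂ) = _; push_cast; ring,
      (hasDerivAt_cubic _ _ _ _ x).deriv]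
    push_cast; field_simp; ring
  · show deriv (fun t => Pw p n 3 t 1 1) x = (((n+3)*(n+5)/2*x^2 + (n+3)/(n-p+3) - (n+3)/2 : ℝ):ℂ)
    rw [show (fun t => Pw p n 3 t 1 1)
        = (fun t:ℝ => ((((n+3)*(n+5)/6:ℝ)*t^3+0*t^2+((n+3)/(n-p+3)-(n+3)/2)*t+0:ℝ):ℂ)) from
      funext fun t => by rw [Pw3 hn1 hp3 hq3]; show ((_:ℝ):ℂ) = _; push_cast; ring,
      (hasDerivAt_cubic _ _ _ _ x).deriv]
    push_cast; ring

end closed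

end closed

/-- for `n ≠ 2p`, there are no operators of order one having the `P_w`
as eigenfunctions: if `P_w'·F₁ + P_w·F₀ = Λ_w·P_w` for all `w`, then `F₁ = 0` and
`F₀` is a scalar multiple of the identity. -/
theorem statement13 (p n : ℝ) (hp : 0 < p) (hpn : p < n) (hn : n ≠ 2 * p)
    (F1 : ℝ → Matrix (Fin 2) (Fin 2) ℂ) (F0 : Matrix (Fin 2) (Fin 2) ℂ)
    (hF1 : ∀ i j, ∃ q : Polynomial ℂ, q.natDegree ≤ 1 ∧ ∀ x : ℝ, F1 x i j = q.eval (x : ℂ))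
    (heig : ∀ w : ℕ, ∃ Λ : Matrix (Fin 2) (Fin 2) ℂ, ∀ x : ℝ,
      mderiv (Pw p n w) x * F1 x + Pw p n w x * F0 = Λ * Pw p n w x) :
    (∀ x : ℝ, F1 x = 0) ∧ ∃ c : ℂ, F0 = c • (1 : Matrix (Fin 2) (Fin 2) ℂ) := by
  -- cast nonzero facts
  have hp1 : (p:ℂ)+1 ≠ 0 := by
    have h : ((p+1:ℝ):ℂ) ≠ 0 := Complex.ofReal_ne_zero.mpr (by nlinarith)
    push_cast at h; convert h using 2 <;> ring_nf
  have hp2 : (p:ℂ)+2 ≠ 0 := by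
    have h : ((p+2:ℝ):ℂ) ≠ 0 := Complex.ofReal_ne_zero.mpr (by nlinarith)
    push_cast at h; convert h using 2 <;> ring_nf
  have hp3 : (p:ℂ)+3 ≠ 0 := by
    have h : ((p+3:ℝ):ℂ) ≠ 0 := Complex.ofReal_ne_zero.mpr (by nlinarith)
    push_cast at h; convert h using 2 <;> ring_nf
  have hq1 : (n:ℂ)-(p:ℂ)+1 ≠ 0 := by
    have h : ((n-p+1:ℝ):ℂ) ≠ 0 := Complex.ofReal_ne_zero.mpr (by nlinarith)
    push_cast at h; convert h using 2 <;> ring_nf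
  have hq2 : (n:ℂ)-(p:ℂ)+2 ≠ 0 := by
    have h : ((n-p+2:ℝ):ℂ) ≠ 0 := Complex.ofReal_ne_zero.mpr (by nlinarith)
    push_cast at h; convert h using 2 <;> ring_nf
  have hq3 : (n:ℂ)-(p:ℂ)+3 ≠ 0 := by
    have h : ((n-p+3:ℝ):ℂ) ≠ 0 := Complex.ofReal_ne_zero.mpr (by nlinarith)
    push_cast at h; convert h using 2 <;> ring_nf
  have hn1 : (n:ℂ)+1 ≠ 0 := by
    have h : ((n+1:ℝ):ℂ) ≠ 0 := Complex.ofReal_ne_zero.mpr (by nlinarith)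
    push_cast at h; convert h using 2 <;> ring_nf
  have hn3 : (n:ℂ)+3 ≠ 0 := by
    have h : ((n+3:ℝ):ℂ) ≠ 0 := Complex.ofReal_ne_zero.mpr (by nlinarith)
    push_cast at h; convert h using 2 <;> ring_nf
  have hn5 : (n:ℂ)+5 ≠ 0 := by
    have h : ((n+5:ℝ):ℂ) ≠ 0 := Complex.ofReal_ne_zero.mpr (by nlinarith)
    push_cast at h; convert h using 2 <;> ring_nf
  have hn6 : (n:ℂ)+6 ≠ 0 := by
    have h : ((n+6:ℝ):ℂ) ≠ 0 := Complex.ofReal_ne_zero.mpr (by nlinarith)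
    push_cast at h; convert h using 2 <;> ring_nf
  have h2p : (n:ℂ)-2*(p:ℂ) ≠ 0 := by
    have h : ((n-2*p:ℝ):ℂ) ≠ 0 := Complex.ofReal_ne_zero.mpr (sub_ne_zero.mpr hn)
    push_cast at h; convert h using 2 <;> ring_nf
  have h2p' : 2*(p:ℂ)-(n:ℂ) ≠ 0 := fun h => h2p (by linear_combination -h)
  have hF1x : ∀ (x:ℝ) (i j : Fin 2), F1 x i j = F1 0 i j + (F1 1 i j - F1 0 i j) * (x:ℂ) := by
    intro x i j
    obtain ⟨q, hdeg, hq⟩ := hF1 i j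
    have h2 : q.natDegree < 2 := lt_of_le_of_lt hdeg one_lt_two
    rw [hq x, hq 0, hq 1]
    push_cast
    rw [Polynomial.eval_eq_sum_range' h2, Polynomial.eval_eq_sum_range' h2,
      Polynomial.eval_eq_sum_range' h2]
    simp only [Finset.sum_range_succ, Finset.sum_range_zero]
    push_cast
    ring
  obtain ⟨L1, hL1⟩ := heig 1
  obtain ⟨L2, hL2⟩ := heig 2
  obtain ⟨L3, hL3⟩ := heig 3
  have E := hL1 (0:ℝ)
  rw [mderiv1 hn1, Pw1 hn1] at E
  have a1z00 := congrArg (fun M => M 0 0) E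
  have a1z11 := congrArg (fun M => M 1 1) E
  have a1z01 := congrArg (fun M => M 0 1) E
  have a1z10 := congrArg (fun M => M 1 0) E
  simp only [Matrix.mul_apply, Fin.sum_univ_two, Matrix.add_apply, Matrix.of_apply, Matrix.cons_val', Matrix.cons_val_zero, Matrix.cons_val_one, Matrix.head_cons, Matrix.empty_val', Matrix.cons_val_fin_one, Matrix.head_fin_const] at a1z00 a1z11 a1z01 a1z10
  push_cast at a1z00 a1z11 a1z01 a1z10
  clear E
  have E := hL1 (1:ℝ)
  rw [mderiv1 hn1, Pw1 hn1] at E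
  have a1o00 := congrArg (fun M => M 0 0) E
  have a1o11 := congrArg (fun M => M 1 1) E
  simp only [Matrix.mul_apply, Fin.sum_univ_two, Matrix.add_apply, Matrix.of_apply, Matrix.cons_val', Matrix.cons_val_zero, Matrix.cons_val_one, Matrix.head_cons, Matrix.empty_val', Matrix.cons_val_fin_one, Matrix.head_fin_const] at a1o00 a1o11
  push_cast at a1o00 a1o11
  clear E
  have E := hL2 (0:ℝ)
  rw [mderiv2 hn1, Pw2 hn1] at E
  have a2z00 := congrArg (fun M => M 0 0) E
  have a2z01 := congrArg (fun M => M 0 1) E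
  have a2z10 := congrArg (fun M => M 1 0) E
  simp only [Matrix.mul_apply, Fin.sum_univ_two, Matrix.add_apply, Matrix.of_apply, Matrix.cons_val', Matrix.cons_val_zero, Matrix.cons_val_one, Matrix.head_cons, Matrix.empty_val', Matrix.cons_val_fin_one, Matrix.head_fin_const] at a2z00 a2z01 a2z10
  push_cast at a2z00 a2z01 a2z10
  clear E
  have E := hL2 (1:ℝ)
  rw [mderiv2 hn1, Pw2 hn1] at E
  have a2o00 := congrArg (fun M => M 0 0) E
  have a2o01 := congrArg (fun M => M 0 1) E
  have a2o10 := congrArg (fun M => M 1 0) E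
  simp only [Matrix.mul_apply, Fin.sum_univ_two, Matrix.add_apply, Matrix.of_apply, Matrix.cons_val', Matrix.cons_val_zero, Matrix.cons_val_one, Matrix.head_cons, Matrix.empty_val', Matrix.cons_val_fin_one, Matrix.head_fin_const] at a2o00 a2o01 a2o10
  push_cast at a2o00 a2o01 a2o10
  clear E
  have E := hL2 (-1:ℝ)
  rw [mderiv2 hn1, Pw2 hn1] at E
  have a2m00 := congrArg (fun M => M 0 0) E
  have a2m01 := congrArg (fun M => M 0 1) E
  have a2m10 := congrArg (fun M => M 1 0) E
  simp only [Matrix.mul_apply, Fin.sum_univ_two, Matrix.add_apply, Matrix.of_apply, Matrix.cons_val', Matrix.cons_val_zero, Matrix.cons_val_one, Matrix.head_cons, Matrix.empty_val', Matrix.cons_val_fin_one, Matrix.head_fin_const] at a2m00 a2m01 a2m10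
  rw [hF1x (-1:ℝ) 0 0, hF1x (-1:ℝ) 1 0] at a2m00
  rw [hF1x (-1:ℝ) 0 1, hF1x (-1:ℝ) 1 1] at a2m01
  rw [hF1x (-1:ℝ) 0 0, hF1x (-1:ℝ) 1 0] at a2m10
  push_cast at a2m00 a2m01 a2m10
  clear E
  have E := hL3 (0:ℝ)
  rw [mderiv3 hn1 hp3 hq3, Pw3 hn1 hp3 hq3] at E
  have a3z00 := congrArg (fun M => M 0 0) E
  have a3z01 := congrArg (fun M => M 0 1) E
  have a3z10 := congrArg (fun M => M 1 0) E
  have a3z11 := congrArg (fun M => M 1 1) E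
  simp only [Matrix.mul_apply, Fin.sum_univ_two, Matrix.add_apply, Matrix.of_apply, Matrix.cons_val', Matrix.cons_val_zero, Matrix.cons_val_one, Matrix.head_cons, Matrix.empty_val', Matrix.cons_val_fin_one, Matrix.head_fin_const] at a3z00 a3z01 a3z10 a3z11
  push_cast at a3z00 a3z01 a3z10 a3z11
  clear E
  have E := hL3 (1:ℝ)
  rw [mderiv3 hn1 hp3 hq3, Pw3 hn1 hp3 hq3] at E
  have a3o00 := congrArg (fun M => M 0 0) E
  have a3o01 := congrArg (fun M => M 0 1) E
  have a3o10 := congrArg (fun M => M 1 0) E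
  have a3o11 := congrArg (fun M => M 1 1) E
  simp only [Matrix.mul_apply, Fin.sum_univ_two, Matrix.add_apply, Matrix.of_apply, Matrix.cons_val', Matrix.cons_val_zero, Matrix.cons_val_one, Matrix.head_cons, Matrix.empty_val', Matrix.cons_val_fin_one, Matrix.head_fin_const] at a3o00 a3o01 a3o10 a3o11
  push_cast at a3o00 a3o01 a3o10 a3o11
  clear E
  have E := hL3 (-1:ℝ)
  rw [mderiv3 hn1 hp3 hq3, Pw3 hn1 hp3 hq3] at E
  have a3m00 := congrArg (fun M => M 0 0) E
  have a3m01 := congrArg (fun M => M 0 1) E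
  have a3m10 := congrArg (fun M => M 1 0) E
  have a3m11 := congrArg (fun M => M 1 1) E
  simp only [Matrix.mul_apply, Fin.sum_univ_two, Matrix.add_apply, Matrix.of_apply, Matrix.cons_val', Matrix.cons_val_zero, Matrix.cons_val_one, Matrix.head_cons, Matrix.empty_val', Matrix.cons_val_fin_one, Matrix.head_fin_const] at a3m00 a3m01 a3m10 a3m11
  rw [hF1x (-1:ℝ) 0 0, hF1x (-1:ℝ) 1 0] at a3m00
  rw [hF1x (-1:ℝ) 0 1, hF1x (-1:ℝ) 1 1] at a3m01
  rw [hF1x (-1:ℝ) 0 0, hF1x (-1:ℝ) 1 0] at a3m10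
  rw [hF1x (-1:ℝ) 0 1, hF1x (-1:ℝ) 1 1] at a3m11
  push_cast at a3m00 a3m01 a3m10 a3m11
  clear E
  have E := hL3 (2:ℝ)
  rw [mderiv3 hn1 hp3 hq3, Pw3 hn1 hp3 hq3] at E
  have a3t00 := congrArg (fun M => M 0 0) E
  have a3t01 := congrArg (fun M => M 0 1) E
  have a3t10 := congrArg (fun M => M 1 0) E
  have a3t11 := congrArg (fun M => M 1 1) E
  simp only [Matrix.mul_apply, Fin.sum_univ_two, Matrix.add_apply, Matrix.of_apply, Matrix.cons_val', Matrix.cons_val_zero, Matrix.cons_val_one, Matrix.head_cons, Matrix.empty_val', Matrix.cons_val_fin_one, Matrix.head_fin_const] at a3t00 a3t01 a3t10 a3t11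
  rw [hF1x (2:ℝ) 0 0, hF1x (2:ℝ) 1 0] at a3t00
  rw [hF1x (2:ℝ) 0 1, hF1x (2:ℝ) 1 1] at a3t01
  rw [hF1x (2:ℝ) 0 0, hF1x (2:ℝ) 1 0] at a3t10
  rw [hF1x (2:ℝ) 0 1, hF1x (2:ℝ) 1 1] at a3t11
  push_cast at a3t00 a3t01 a3t10 a3t11
  clear E
  have cw1lin00 : (F1 1 0 0 - F1 0 0 0) + F0 0 0 = L1 0 0 := by
    linear_combination (norm := ring1) a1o00 - a1z00
  have cw1lin11 : (F1 1 1 1 - F1 0 1 1) + F0 1 1 = L1 1 1 := by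
    linear_combination (norm := ring1) a1o11 - a1z11
  have cw1c01 : F1 0 0 1 + (1/((p:ℂ)+1))*F0 1 1 = (1/((p:ℂ)+1))*L1 0 0 := by
    linear_combination (norm := ring1) a1z01
  have cw1c10 : F1 0 1 0 + (1/((n:ℂ)-(p:ℂ)+1))*F0 0 0 = (1/((n:ℂ)-(p:ℂ)+1))*L1 1 1 := by
    linear_combination (norm := ring1) a1z10
  have cw2q00 : ((n:ℂ)+3)*(F1 1 0 0 - F1 0 0 0) + ((n:ℂ)+3)/2*F0 0 0 = ((n:ℂ)+3)/2*L2 0 0 := by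
    linear_combination (norm := ring1) (1/2)*a2o00 + (1/2)*a2m00 - a2z00
  have cw2q01 : ((n:ℂ)+3)*(F1 1 0 1 - F1 0 0 1) + ((n:ℂ)+3)/2*F0 0 1 = ((n:ℂ)+3)/2*L2 0 1 := by
    linear_combination (norm := ring1) (1/2)*a2o01 + (1/2)*a2m01 - a2z01
  have cw2q10 : ((n:ℂ)+3)*(F1 1 1 0 - F1 0 1 0) + ((n:ℂ)+3)/2*F0 1 0 = ((n:ℂ)+3)/2*L2 1 0 := by
    linear_combination (norm := ring1) (1/2)*a2o10 + (1/2)*a2m10 - a2z10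
  have cw2lin01 : ((n:ℂ)+3)*F1 0 0 1 + ((n:ℂ)+3)/((p:ℂ)+2)*(F1 1 1 1 - F1 0 1 1) + ((n:ℂ)+3)/((p:ℂ)+2)*F0 1 1 = ((n:ℂ)+3)/((p:ℂ)+2)*L2 0 0 := by
    linear_combination (norm := ring1) (1/2)*a2o01 - (1/2)*a2m01
  have cw2c01 : ((n:ℂ)+3)/((p:ℂ)+2)*F1 0 1 1 + ((1/((p:ℂ)+2)) - 1/2)*F0 0 1 = ((1/((n:ℂ)-(p:ℂ)+2)) - 1/2)*L2 0 1 := by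
    linear_combination (norm := ring1) a2z01
  have cw2c10 : ((n:ℂ)+3)/((n:ℂ)-(p:ℂ)+2)*F1 0 0 0 + ((1/((n:ℂ)-(p:ℂ)+2)) - 1/2)*F0 1 0 = ((1/((p:ℂ)+2)) - 1/2)*L2 1 0 := by
    linear_combination (norm := ring1) a2z10
  have cw3cub00 : ((n:ℂ)+3)*((n:ℂ)+5)/2*(F1 1 0 0 - F1 0 0 0) + ((n:ℂ)+3)*((n:ℂ)+5)/6*F0 0 0 = ((n:ℂ)+3)*((n:ℂ)+5)/6*L3 0 0 := by
    linear_combination (norm := ring1) (1/6)*a3t00 - (1/2)*a3o00 + (1/2)*a3z00 - (1/6)*a3m00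
  have cw3cub01 : ((n:ℂ)+3)*((n:ℂ)+5)/2*(F1 1 0 1 - F1 0 0 1) + ((n:ℂ)+3)*((n:ℂ)+5)/6*F0 0 1 = ((n:ℂ)+3)*((n:ℂ)+5)/6*L3 0 1 := by
    linear_combination (norm := ring1) (1/6)*a3t01 - (1/2)*a3o01 + (1/2)*a3z01 - (1/6)*a3m01
  have cw3cub10 : ((n:ℂ)+3)*((n:ℂ)+5)/2*(F1 1 1 0 - F1 0 1 0) + ((n:ℂ)+3)*((n:ℂ)+5)/6*F0 1 0 = ((n:ℂ)+3)*((n:ℂ)+5)/6*L3 1 0 := by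
    linear_combination (norm := ring1) (1/6)*a3t10 - (1/2)*a3o10 + (1/2)*a3z10 - (1/6)*a3m10
  have cw3cub11 : ((n:ℂ)+3)*((n:ℂ)+5)/2*(F1 1 1 1 - F1 0 1 1) + ((n:ℂ)+3)*((n:ℂ)+5)/6*F0 1 1 = ((n:ℂ)+3)*((n:ℂ)+5)/6*L3 1 1 := by
    linear_combination (norm := ring1) (1/6)*a3t11 - (1/2)*a3o11 + (1/2)*a3z11 - (1/6)*a3m11
  have cw3q00 : ((n:ℂ)+3)*((n:ℂ)+5)/2*F1 0 0 0 + ((n:ℂ)+3)*((n:ℂ)+5)/((p:ℂ)+3)*(F1 1 1 0 - F1 0 1 0) + ((n:ℂ)+3)*((n:ℂ)+5)/(2*((p:ℂ)+3))*F0 1 0 = ((n:ℂ)+3)*((n:ℂ)+5)/(2*((n:ℂ)-(p:ℂ)+3))*L3 0 1 := by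
    linear_combination (norm := ring1) (1/2)*a3o00 + (1/2)*a3m00 - a3z00
  have cw3q11 : ((n:ℂ)+3)*((n:ℂ)+5)/2*F1 0 1 1 + ((n:ℂ)+3)*((n:ℂ)+5)/((n:ℂ)-(p:ℂ)+3)*(F1 1 0 1 - F1 0 0 1) + ((n:ℂ)+3)*((n:ℂ)+5)/(2*((n:ℂ)-(p:ℂ)+3))*F0 0 1 = ((n:ℂ)+3)*((n:ℂ)+5)/(2*((p:ℂ)+3))*L3 1 0 := by
    linear_combination (norm := ring1) (1/2)*a3o11 + (1/2)*a3m11 - a3z11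
  have cw3lin01 : (((n:ℂ)+3)/((p:ℂ)+3) - ((n:ℂ)+3)/2)*((F1 1 0 1 - F1 0 0 1) + F0 0 1) + ((n:ℂ)+3)*((n:ℂ)+5)/((p:ℂ)+3)*F1 0 1 1 = (((n:ℂ)+3)/((n:ℂ)-(p:ℂ)+3) - ((n:ℂ)+3)/2)*L3 0 1 := by
    linear_combination (norm := ring1) (-(1/6))*a3t01 + a3o01 - (1/3)*a3m01 - (1/2)*a3z01
  have cw3lin10 : (((n:ℂ)+3)/((n:ℂ)-(p:ℂ)+3) - ((n:ℂ)+3)/2)*((F1 1 1 0 - F1 0 1 0) + F0 1 0) + ((n:ℂ)+3)*((n:ℂ)+5)/((n:ℂ)-(p:ℂ)+3)*F1 0 0 0 = (((n:ℂ)+3)/((p:ℂ)+3) - ((n:ℂ)+3)/2)*L3 1 0 := by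
    linear_combination (norm := ring1) (-(1/6))*a3t10 + a3o10 - (1/3)*a3m10 - (1/2)*a3z10
  have cw3c00 : (((n:ℂ)+3)/((p:ℂ)+3) - ((n:ℂ)+3)/2)*F1 0 0 0 - ((n:ℂ)+3)/(2*((p:ℂ)+3))*F0 1 0 = -(((n:ℂ)+3)/(2*((n:ℂ)-(p:ℂ)+3)))*L3 0 1 := by
    linear_combination (norm := ring1) a3z00
  have cw3c11 : (((n:ℂ)+3)/((n:ℂ)-(p:ℂ)+3) - ((n:ℂ)+3)/2)*F1 0 1 1 - ((n:ℂ)+3)/(2*((n:ℂ)-(p:ℂ)+3))*F0 0 1 = -(((n:ℂ)+3)/(2*((p:ℂ)+3)))*L3 1 0 := by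
    linear_combination (norm := ring1) a3z11
  have cw3c01 : (((n:ℂ)+3)/((p:ℂ)+3) - ((n:ℂ)+3)/2)*F1 0 0 1 - ((n:ℂ)+3)/(2*((p:ℂ)+3))*F0 1 1 = -(((n:ℂ)+3)/(2*((p:ℂ)+3)))*L3 0 0 := by
    linear_combination (norm := ring1) a3z01
  have cw3c10 : (((n:ℂ)+3)/((n:ℂ)-(p:ℂ)+3) - ((n:ℂ)+3)/2)*F1 0 1 0 - ((n:ℂ)+3)/(2*((n:ℂ)-(p:ℂ)+3))*F0 0 0 = -(((n:ℂ)+3)/(2*((n:ℂ)-(p:ℂ)+3)))*L3 1 1 := by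
    linear_combination (norm := ring1) a3z10
  field_simp at cw1c01 cw1c10 cw2q00 cw2q01 cw2q10 cw2lin01 cw2c01 cw2c10 cw3cub00 cw3cub01 cw3cub10 cw3cub11 cw3q00 cw3q11 cw3lin01 cw3lin10 cw3c00 cw3c11 cw3c01 cw3c10
  have cancel : ∀ (c X : ℂ), c ≠ 0 → c * X = 0 → X = 0 := by
    intro c X hc h
    rcases mul_eq_zero.mp h with h'|h'
    · exact absurd h' hc
    · exact h'
  have hB00z : 24*((p:ℂ)+3)^2*((n:ℂ)+3)*((n:ℂ)+5)*(F1 1 0 0 - F1 0 0 0) = 0 := by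
    linear_combination (norm := ring1) 6*((p:ℂ)+3)^2*((n:ℂ)+3)*((n:ℂ)+5)*(cw3cub00 - 2*cw1lin00 + 2*cw3c01 + 2*cw1c01)
  have hB00 : (F1 1 0 0 - F1 0 0 0) = 0 := cancel _ _ (mul_ne_zero (mul_ne_zero (mul_ne_zero (by norm_num) (pow_ne_zero 2 hp3)) hn3) hn5) hB00z
  have hB11z : 24*((n:ℂ)-(p:ℂ)+3)^2*((n:ℂ)+3)*((n:ℂ)+5)*(F1 1 1 1 - F1 0 1 1) = 0 := by
    linear_combination (norm := ring1) 6*((n:ℂ)-(p:ℂ)+3)^2*((n:ℂ)+3)*((n:ℂ)+5)*(cw3cub11 - 2*cw1lin11 + 2*cw3c10 + 2*cw1c10)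
  have hB11 : (F1 1 1 1 - F1 0 1 1) = 0 := cancel _ _ (mul_ne_zero (mul_ne_zero (mul_ne_zero (by norm_num) (pow_ne_zero 2 hq3)) hn3) hn5) hB11z
  have hudz : ((n:ℂ)+3)*(F0 1 1 - F0 0 0) = 0 := by
    linear_combination (norm := ring1) ((n:ℂ)+3)*(((p:ℂ)+2)*(cw1c01 - cw1lin00) - ((p:ℂ)+1)*(cw2lin01 - cw2q00) - (p:ℂ)*hB00 + ((p:ℂ)+1)*hB11)
  have hu : F0 1 1 - F0 0 0 = 0 := cancel _ _ hn3 hudz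
  have hC01z : ((p:ℂ)+1)*F1 0 0 1 = 0 := by
    linear_combination (norm := ring1) cw1c01 - cw1lin00 + hB00 - hu
  have hC01 : F1 0 0 1 = 0 := cancel _ _ hp1 hC01z
  have hC10z : ((n:ℂ)-(p:ℂ)+1)*F1 0 1 0 = 0 := by
    linear_combination (norm := ring1) cw1c10 - cw1lin11 + hB11 + hu
  have hC10 : F1 0 1 0 = 0 := cancel _ _ hq1 hC10z
  have hCB00z : 8*((p:ℂ)+3)*((n:ℂ)-(p:ℂ)+3)*((n:ℂ)+3)*((n:ℂ)+5)*(F1 0 0 0 + (F1 1 1 0 - F1 0 1 0)) = 0 := by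
    linear_combination (norm := ring1) 4*((p:ℂ)+3)*((n:ℂ)+3)*((n:ℂ)+5)*(cw3q00 + cw3c00)
  have hCB00 : F1 0 0 0 + (F1 1 1 0 - F1 0 1 0) = 0 := cancel _ _ (mul_ne_zero (mul_ne_zero (mul_ne_zero (mul_ne_zero (by norm_num) hp3) hq3) hn3) hn5) hCB00z
  have hCB11z : 8*((n:ℂ)-(p:ℂ)+3)*((p:ℂ)+3)*((n:ℂ)+3)*((n:ℂ)+5)*(F1 0 1 1 + (F1 1 0 1 - F1 0 0 1)) = 0 := by
    linear_combination (norm := ring1) 4*((n:ℂ)-(p:ℂ)+3)*((n:ℂ)+3)*((n:ℂ)+5)*(cw3q11 + cw3c11)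
  have hCB11 : F1 0 1 1 + (F1 1 0 1 - F1 0 0 1) = 0 := cancel _ _ (mul_ne_zero (mul_ne_zero (mul_ne_zero (mul_ne_zero (by norm_num) hq3) hp3) hn3) hn5) hCB11z
  have S8vz : (4*((p:ℂ)+2)*((n:ℂ)-(p:ℂ)+2)*((n:ℂ)+3)^2 + 8*((p:ℂ)+2)^2*((n:ℂ)+3) - 4*((p:ℂ)+2)^2*((n:ℂ)-(p:ℂ)+2)*((n:ℂ)+3))*(F1 1 0 1 - F1 0 0 1) + (4*((p:ℂ)+2)^2*((n:ℂ)+3) - 4*((p:ℂ)+2)*((n:ℂ)-(p:ℂ)+2)*((n:ℂ)+3))*F0 0 1 = 0 := by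
    linear_combination (norm := ring1) (-2*((p:ℂ)+2)*((n:ℂ)+3))*(cw2c01 + ((n:ℂ)-(p:ℂ))*((p:ℂ)+2)*cw2q01 - 2*((n:ℂ)+3)*((n:ℂ)-(p:ℂ)+2)*hCB11)
  have S9vz : (24*((p:ℂ)+3)*((n:ℂ)-(p:ℂ)+3)*((n:ℂ)+3)*((n:ℂ)+5)*((n:ℂ)+4) + 72*((p:ℂ)+3)^2*((n:ℂ)+3)*((n:ℂ)+5) - 24*((p:ℂ)+3)^2*((n:ℂ)-(p:ℂ)+3)*((n:ℂ)+3)*((n:ℂ)+5))*(F1 1 0 1 - F1 0 0 1) + (24*((p:ℂ)+3)^2*((n:ℂ)+3)*((n:ℂ)+5) - 24*((p:ℂ)+3)*((n:ℂ)-(p:ℂ)+3)*((n:ℂ)+3)*((n:ℂ)+5))*F0 0 1 = 0 := by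
    linear_combination (norm := ring1) (-12*((p:ℂ)+3)*((n:ℂ)+3)*((n:ℂ)+5))*(cw3lin01 + ((p:ℂ)+3)*((n:ℂ)-(p:ℂ)+1)/2*cw3cub01 - 2*((n:ℂ)+5)*((n:ℂ)-(p:ℂ)+3)*hCB11)
  have S10z : (-24)*((n:ℂ)+3)*((n:ℂ)+5)*((p:ℂ)+2)*((p:ℂ)+3)*((n:ℂ)+6)*(F1 1 0 1 - F1 0 0 1) = 0 := by
    linear_combination (norm := ring1) 6*((p:ℂ)+3)*((n:ℂ)+5)*S8vz - ((p:ℂ)+2)*S9vz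
  have hB01 : (F1 1 0 1 - F1 0 0 1) = 0 := cancel _ _ (mul_ne_zero (mul_ne_zero (mul_ne_zero (mul_ne_zero (mul_ne_zero (by norm_num) hn3) hn5) hp2) hp3) hn6) S10z
  have hF01z : 24*((p:ℂ)+3)*((n:ℂ)+3)*((n:ℂ)+5)*(2*(p:ℂ)-(n:ℂ))*F0 0 1 = 0 := by
    linear_combination (norm := ring1) S9vz - (24*((p:ℂ)+3)*((n:ℂ)-(p:ℂ)+3)*((n:ℂ)+3)*((n:ℂ)+5)*((n:ℂ)+4) + 72*((p:ℂ)+3)^2*((n:ℂ)+3)*((n:ℂ)+5) - 24*((p:ℂ)+3)^2*((n:ℂ)-(p:ℂ)+3)*((n:ℂ)+3)*((n:ℂ)+5))*hB01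
  have hF01 : F0 0 1 = 0 := cancel _ _ (mul_ne_zero (mul_ne_zero (mul_ne_zero (mul_ne_zero (by norm_num) hp3) hn3) hn5) h2p') hF01z
  have S8mz : (4*((p:ℂ)+2)*((n:ℂ)-(p:ℂ)+2)*((n:ℂ)+3)^2 + 8*((n:ℂ)-(p:ℂ)+2)^2*((n:ℂ)+3) - 4*((n:ℂ)-(p:ℂ)+2)^2*((p:ℂ)+2)*((n:ℂ)+3))*(F1 1 1 0 - F1 0 1 0) + (4*((n:ℂ)-(p:ℂ)+2)^2*((n:ℂ)+3) - 4*((n:ℂ)-(p:ℂ)+2)*((p:ℂ)+2)*((n:ℂ)+3))*F0 1 0 = 0 := by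
    linear_combination (norm := ring1) (-2*((n:ℂ)-(p:ℂ)+2)*((n:ℂ)+3))*(cw2c10 + (p:ℂ)*((n:ℂ)-(p:ℂ)+2)*cw2q10 - 2*((n:ℂ)+3)*((p:ℂ)+2)*hCB00)
  have S9mz : (24*((n:ℂ)-(p:ℂ)+3)*((p:ℂ)+3)*((n:ℂ)+3)*((n:ℂ)+5)*((n:ℂ)+4) + 72*((n:ℂ)-(p:ℂ)+3)^2*((n:ℂ)+3)*((n:ℂ)+5) - 24*((n:ℂ)-(p:ℂ)+3)^2*((p:ℂ)+3)*((n:ℂ)+3)*((n:ℂ)+5))*(F1 1 1 0 - F1 0 1 0) + (24*((n:ℂ)-(p:ℂ)+3)^2*((n:ℂ)+3)*((n:ℂ)+5) - 24*((n:ℂ)-(p:ℂ)+3)*((p:ℂ)+3)*((n:ℂ)+3)*((n:ℂ)+5))*F0 1 0 = 0 := by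
    linear_combination (norm := ring1) (-12*((n:ℂ)-(p:ℂ)+3)*((n:ℂ)+3)*((n:ℂ)+5))*(cw3lin10 + ((n:ℂ)-(p:ℂ)+3)*((p:ℂ)+1)/2*cw3cub10 - 2*((n:ℂ)+5)*((p:ℂ)+3)*hCB00)
  have S10mz : (-24)*((n:ℂ)+3)*((n:ℂ)+5)*((n:ℂ)-(p:ℂ)+2)*((n:ℂ)-(p:ℂ)+3)*((n:ℂ)+6)*(F1 1 1 0 - F1 0 1 0) = 0 := by
    linear_combination (norm := ring1) 6*((n:ℂ)-(p:ℂ)+3)*((n:ℂ)+5)*S8mz - ((n:ℂ)-(p:ℂ)+2)*S9mz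
  have hB10 : (F1 1 1 0 - F1 0 1 0) = 0 := cancel _ _ (mul_ne_zero (mul_ne_zero (mul_ne_zero (mul_ne_zero (mul_ne_zero (by norm_num) hn3) hn5) hq2) hq3) hn6) S10mz
  have hF10z : 24*((n:ℂ)-(p:ℂ)+3)*((n:ℂ)+3)*((n:ℂ)+5)*((n:ℂ)-2*(p:ℂ))*F0 1 0 = 0 := by
    linear_combination (norm := ring1) S9mz - (24*((n:ℂ)-(p:ℂ)+3)*((p:ℂ)+3)*((n:ℂ)+3)*((n:ℂ)+5)*((n:ℂ)+4) + 72*((n:ℂ)-(p:ℂ)+3)^2*((n:ℂ)+3)*((n:ℂ)+5) - 24*((n:ℂ)-(p:ℂ)+3)^2*((p:ℂ)+3)*((n:ℂ)+3)*((n:ℂ)+5))*hB10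
  have hF10 : F0 1 0 = 0 := cancel _ _ (mul_ne_zero (mul_ne_zero (mul_ne_zero (mul_ne_zero (by norm_num) hq3) hn3) hn5) h2p) hF10z
  have hC00 : F1 0 0 0 = 0 := by linear_combination hCB00 - hB10
  have hC11 : F1 0 1 1 = 0 := by linear_combination hCB11 - hB01
  constructor
  · intro x
    have h00 : F1 x 0 0 = 0 := by rw [hF1x x 0 0]; linear_combination hC00 + (x:ℂ)*hB00
    have h01 : F1 x 0 1 = 0 := by rw [hF1x x 0 1]; linear_combination hC01 + (x:ℂ)*hB01
    have h10 : F1 x 1 0 = 0 := by rw [hF1x x 1 0]; linear_combination hC10 + (x:ℂ)*hB10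
    have h11 : F1 x 1 1 = 0 := by rw [hF1x x 1 1]; linear_combination hC11 + (x:ℂ)*hB11
    rw [Matrix.eta_fin_two (F1 x), h00, h01, h10, h11]
    ext i j
    fin_cases i <;> fin_cases j <;> simp
  · refine ⟨F0 0 0, ?_⟩
    have h11 : F0 1 1 = F0 0 0 := by linear_combination hu
    rw [Matrix.eta_fin_two F0, hF01, hF10, h11]
    ext i j
    fin_cases i <;> fin_cases j <;> simp [Matrix.one_apply]

end
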